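/- arXiv:2201.03839 — 2 statements merged into one kernel-verified Lean document; each statement's English description precedes it below -/
import Mathlib

section
/- With X = √(g₂^{-1} g₁), g_i = I + ε h_i, Tr(X⁴) = n + 2ε Tr(h₁ - h₂) + ε²(Tr(h₁²) + 3 Tr(h₂²) - 4 Tr(h₁h₂)) + ε³(-4 Tr(h₂³) + 6 Tr(h₁h₂²) - 2 Tr(h₁²h₂)) + O(ε⁴). -/
open Asymptotics Filter Matrix

/-- Remainder block: `R(ε) = -h₂³h₁ + h₂⁴ D (1+εh₁)` where `D` will be `(1+εh₂)⁻¹`. -/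
noncomputable def Rf {n : ℕ} (h₁ h₂ : Matrix (Fin n) (Fin n) ℝ) (ε : ℝ)
    (D : Matrix (Fin n) (Fin n) ℝ) : Matrix (Fin n) (Fin n) ℝ :=
  -(h₂*(h₂*(h₂*h₁))) + h₂*(h₂*(h₂*(h₂*D)))*(1 + ε • h₁)

/-- The matrix whose trace is the `O(ε⁴)` coefficient function. -/
noncomputable def auxF {n : ℕ} (h₁ h₂ : Matrix (Fin n) (Fin n) ℝ) (ε : ℝ)
    (D : Matrix (Fin n) (Fin n) ℝ) : Matrix (Fin n) (Fin n) ℝ :=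
  ((h₂*h₂ - h₂*h₁)*(h₂*h₂ - h₂*h₁)
      + (h₁ - h₂)*(h₂*(h₂*h₁) - h₂*(h₂*h₂))
      + (h₂*(h₂*h₁) - h₂*(h₂*h₂))*(h₁ - h₂))
    + Rf h₁ h₂ ε D + Rf h₁ h₂ ε D
    + ε • ((h₁ - h₂)*Rf h₁ h₂ ε D + Rf h₁ h₂ ε D*(h₁ - h₂)
        + (h₂*h₂ - h₂*h₁)*(h₂*(h₂*h₁) - h₂*(h₂*h₂))
        + (h₂*(h₂*h₁) - h₂*(h₂*h₂))*(h₂*h₂ - h₂*h₁))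
    + ε^2 • ((h₂*h₂ - h₂*h₁)*Rf h₁ h₂ ε D + Rf h₁ h₂ ε D*(h₂*h₂ - h₂*h₁)
        + (h₂*(h₂*h₁) - h₂*(h₂*h₂))*(h₂*(h₂*h₁) - h₂*(h₂*h₂)))
    + ε^3 • ((h₂*(h₂*h₁) - h₂*(h₂*h₂))*Rf h₁ h₂ ε D
        + Rf h₁ h₂ ε D*(h₂*(h₂*h₁) - h₂*(h₂*h₂)))
    + ε^4 • (Rf h₁ h₂ ε D*Rf h₁ h₂ ε D)

noncomputable def auxg {n : ℕ} (h₁ h₂ : Matrix (Fin n) (Fin n) ℝ) (ε : ℝ) : ℝ :=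
  (auxF h₁ h₂ ε ((1 + ε • h₂)⁻¹)).trace

set_option maxHeartbeats 1000000 in
theorem aux_key (n : ℕ) (h₁ h₂ : Matrix (Fin n) (Fin n) ℝ) (ε : ℝ)
    (hu : IsUnit (1 + ε • h₂ : Matrix (Fin n) (Fin n) ℝ).det) :
    (((1 + ε • h₂)⁻¹ * (1 + ε • h₁)) ^ 2).trace
          - ((n : ℝ) + 2 * ε * (h₁ - h₂).trace
            + ε ^ 2 * ((h₁ ^ 2).trace + 3 * (h₂ ^ 2).trace - 4 * (h₁ * h₂).trace)
            + ε ^ 3 * (-4 * (h₂ ^ 3).trace + 6 * (h₁ * h₂ ^ 2).trace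
              - 2 * (h₁ ^ 2 * h₂).trace))
      = ε^4 * auxg h₁ h₂ ε := by
  set D := (1 + ε • h₂)⁻¹ with hDdef
  have hBD : (1 + ε • h₂) * D = 1 := mul_nonsing_inv _ hu
  have hDB : D * (1 + ε • h₂) = 1 := nonsing_inv_mul _ hu
  have hEB : (h₂*(h₂*(h₂*(h₂*D)))) * (1 + ε • h₂) = h₂*(h₂*(h₂*h₂)) := by
    simp only [mul_assoc, hDB, mul_one]
  have hSB : ((1:Matrix (Fin n) (Fin n) ℝ) - ε • h₂ + ε^2 • (h₂*h₂) - ε^3 • (h₂*(h₂*h₂)))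
        * (1 + ε • h₂) = 1 - ε^4 • (h₂*(h₂*(h₂*h₂))) := by
    simp only [mul_add, add_mul, sub_mul, mul_sub, smul_mul_assoc, mul_smul_comm, smul_smul,
      one_mul, mul_one, mul_assoc]
    module
  have hD : D = (1 - ε • h₂ + ε^2 • (h₂*h₂) - ε^3 • (h₂*(h₂*h₂)))
      + ε^4 • (h₂*(h₂*(h₂*(h₂*D)))) := by
    have h1 : (((1:Matrix (Fin n) (Fin n) ℝ) - ε • h₂ + ε^2 • (h₂*h₂) - ε^3 • (h₂*(h₂*h₂)))
        + ε^4 • (h₂*(h₂*(h₂*(h₂*D))))) * (1 + ε • h₂) = 1 := by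
      rw [add_mul, hSB, smul_mul_assoc, hEB, sub_add_cancel]
    calc D = 1 * D := (one_mul _).symm
      _ = ((((1:Matrix (Fin n) (Fin n) ℝ) - ε • h₂ + ε^2 • (h₂*h₂) - ε^3 • (h₂*(h₂*h₂)))
        + ε^4 • (h₂*(h₂*(h₂*(h₂*D))))) * (1 + ε • h₂)) * D := by rw [h1]
      _ = (((1:Matrix (Fin n) (Fin n) ℝ) - ε • h₂ + ε^2 • (h₂*h₂) - ε^3 • (h₂*(h₂*h₂)))
        + ε^4 • (h₂*(h₂*(h₂*(h₂*D))))) * ((1 + ε • h₂) * D) := by rw [mul_assoc]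
      _ = _ := by rw [hBD, mul_one]
  have c1 : (h₂*h₁).trace = (h₁*h₂).trace := trace_mul_comm _ _
  have c2 : (h₂*(h₂*h₁)).trace = (h₁*(h₂*h₂)).trace := by
    calc (h₂*(h₂*h₁)).trace = ((h₂*h₁)*h₂).trace := trace_mul_comm _ _
      _ = (h₂*(h₁*h₂)).trace := by rw [mul_assoc]
      _ = ((h₁*h₂)*h₂).trace := trace_mul_comm _ _
      _ = (h₁*(h₂*h₂)).trace := by rw [mul_assoc]
  have c3 : (h₂*(h₁*h₂)).trace = (h₁*(h₂*h₂)).trace := by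
    calc (h₂*(h₁*h₂)).trace = ((h₁*h₂)*h₂).trace := trace_mul_comm _ _
      _ = (h₁*(h₂*h₂)).trace := by rw [mul_assoc]
  have c4 : (h₂*(h₁*h₁)).trace = (h₁*(h₁*h₂)).trace := by
    calc (h₂*(h₁*h₁)).trace = ((h₁*h₁)*h₂).trace := trace_mul_comm _ _
      _ = (h₁*(h₁*h₂)).trace := by rw [mul_assoc]
  have c5 : (h₁*(h₂*h₁)).trace = (h₁*(h₁*h₂)).trace := by
    calc (h₁*(h₂*h₁)).trace = ((h₂*h₁)*h₁).trace := trace_mul_comm _ _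
      _ = (h₂*(h₁*h₁)).trace := by rw [mul_assoc]
      _ = (h₁*(h₁*h₂)).trace := c4
  rw [auxg, ← hDdef]
  simp only [auxF]
  set C := (1:Matrix (Fin n) (Fin n) ℝ) + ε • h₁ with hC
  set K1 := h₁ - h₂ with hK1
  set K2 := h₂*h₂ - h₂*h₁ with hK2
  set K3 := h₂*(h₂*h₁) - h₂*(h₂*h₂) with hK3
  set R := Rf h₁ h₂ ε D with hR
  have hA : D * C = 1 + ε • K1 + ε^2 • K2 + ε^3 • K3 + ε^4 • R := by
    conv_lhs => rw [hD]
    rw [hK1, hK2, hK3, hR, Rf, hC]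
    simp only [mul_add, add_mul, sub_mul, mul_sub, smul_mul_assoc, mul_smul_comm, smul_smul,
      smul_add, smul_sub, smul_neg, neg_mul, mul_neg, neg_neg,
      one_mul, mul_one, mul_assoc]
    module
  have L2 : (K1*K1).trace + (K2).trace + (K2).trace
      = (h₁^2).trace + 3*(h₂^2).trace - 4*(h₁*h₂).trace := by
    rw [hK1, hK2]
    simp only [pow_two, mul_add, add_mul, sub_mul, mul_sub,
      Matrix.trace_add, Matrix.trace_sub]
    rw [c1]; ring
  have L3 : (K3).trace + (K3).trace + (K1*K2).trace + (K2*K1).trace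
      = -4*(h₂^3).trace + 6*(h₁*h₂^2).trace - 2*(h₁^2*h₂).trace := by
    rw [hK1, hK2, hK3]
    simp only [pow_succ, pow_zero, one_mul, mul_add, add_mul, sub_mul, mul_sub, mul_assoc,
      Matrix.trace_add, Matrix.trace_sub]
    rw [c2, c3, c4, c5]; ring
  rw [pow_two, hA]
  simp only [mul_add, add_mul, smul_mul_assoc, mul_smul_comm, smul_smul,
    smul_add, one_mul, mul_one,
    Matrix.trace_add, Matrix.trace_smul, smul_eq_mul, Matrix.trace_one, Fintype.card_fin]
  linear_combination ε^2 * L2 + ε^3 * L3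

set_option maxHeartbeats 1000000 in
/-- For `X = √(g₂⁻¹ g₁)` with `g_i = I + ε h_i`, so that `X⁴ = (g₂⁻¹g₁)²`,
`Tr(X⁴) = n + 2ε Tr(h₁-h₂) + ε²(Tr h₁² + 3 Tr h₂² - 4 Tr(h₁h₂))
  + ε³(-4 Tr h₂³ + 6 Tr(h₁h₂²) - 2 Tr(h₁²h₂)) + O(ε⁴)`. -/
theorem trace_fourth_expansion (n : ℕ) (h₁ h₂ : Matrix (Fin n) (Fin n) ℝ)
    (hs₁ : h₁.IsSymm) (hs₂ : h₂.IsSymm) :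
    (fun ε : ℝ =>
        (((1 + ε • h₂)⁻¹ * (1 + ε • h₁)) ^ 2).trace
          - ((n : ℝ) + 2 * ε * (h₁ - h₂).trace
            + ε ^ 2 * ((h₁ ^ 2).trace + 3 * (h₂ ^ 2).trace - 4 * (h₁ * h₂).trace)
            + ε ^ 3 * (-4 * (h₂ ^ 3).trace + 6 * (h₁ * h₂ ^ 2).trace
              - 2 * (h₁ ^ 2 * h₂).trace)))
      =O[nhds 0] fun ε : ℝ => ε ^ 4 := by
  have hdc : Continuous fun ε : ℝ => (1 + ε • h₂ : Matrix (Fin n) (Fin n) ℝ).det :=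
    (continuous_const.add (continuous_id.smul continuous_const)).matrix_det
  have h0 : (1 + (0:ℝ) • h₂ : Matrix (Fin n) (Fin n) ℝ).det ≠ 0 := by simp
  have hdet : ∀ᶠ ε : ℝ in nhds 0, IsUnit (1 + ε • h₂ : Matrix (Fin n) (Fin n) ℝ).det := by
    filter_upwards [hdc.continuousAt.eventually_ne h0] with ε hε
    exact isUnit_iff_ne_zero.mpr hε
  have heq : ∀ᶠ ε : ℝ in nhds 0,
      (((1 + ε • h₂)⁻¹ * (1 + ε • h₁)) ^ 2).trace
          - ((n : ℝ) + 2 * ε * (h₁ - h₂).trace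
            + ε ^ 2 * ((h₁ ^ 2).trace + 3 * (h₂ ^ 2).trace - 4 * (h₁ * h₂).trace)
            + ε ^ 3 * (-4 * (h₂ ^ 3).trace + 6 * (h₁ * h₂ ^ 2).trace
              - 2 * (h₁ ^ 2 * h₂).trace))
        = ε ^ 4 * auxg h₁ h₂ ε := by
    filter_upwards [hdet] with ε hu
    exact aux_key n h₁ h₂ ε hu
  have hgc : ContinuousAt (auxg h₁ h₂) 0 := by
    have hDc : ContinuousAt (fun ε : ℝ => (1 + ε • h₂)⁻¹) 0 := by
      have hdet1 : (1 + (0:ℝ) • h₂ : Matrix (Fin n) (Fin n) ℝ).det = 1 := by simp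
      have h1 : ContinuousAt Inv.inv (1 + (0:ℝ) • h₂ : Matrix (Fin n) (Fin n) ℝ) := by
        apply continuousAt_matrix_inv
        rw [hdet1, Ring.inverse_eq_inv']
        exact continuousAt_inv₀ one_ne_zero
      have hlin : Continuous (fun ε : ℝ => (1 : Matrix (Fin n) (Fin n) ℝ) + ε • h₂) :=
        continuous_const.add (continuous_id.smul continuous_const)
      exact ContinuousAt.comp (f := fun ε : ℝ => 1 + ε • h₂) (x := 0) h1 hlin.continuousAt
    have hRc : Continuous (fun p : ℝ × Matrix (Fin n) (Fin n) ℝ => Rf h₁ h₂ p.1 p.2) := by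
      unfold Rf
      exact continuous_const.add ((continuous_const.mul (continuous_const.mul
        (continuous_const.mul (continuous_const.mul continuous_snd)))).mul
        (continuous_const.add (continuous_fst.smul continuous_const)))
    have hFc : Continuous (fun p : ℝ × Matrix (Fin n) (Fin n) ℝ => auxF h₁ h₂ p.1 p.2) := by
      unfold auxF
      exact ((((((continuous_const.add hRc).add hRc).add
        (continuous_fst.smul ((((continuous_const.mul hRc).add
          (hRc.mul continuous_const)).add continuous_const).add continuous_const))).add
        ((continuous_fst.pow 2).smul (((continuous_const.mul hRc).add
          (hRc.mul continuous_const)).add continuous_const))).add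
        ((continuous_fst.pow 3).smul ((continuous_const.mul hRc).add
          (hRc.mul continuous_const)))).add
        ((continuous_fst.pow 4).smul (hRc.mul hRc)))
    have hpair : ContinuousAt (fun ε : ℝ => ((ε, (1 + ε • h₂)⁻¹) :
        ℝ × Matrix (Fin n) (Fin n) ℝ)) 0 := continuous_id.continuousAt.prodMk hDc
    have htr : Continuous (Matrix.trace : Matrix (Fin n) (Fin n) ℝ → ℝ) :=
      continuous_id.matrix_trace
    have hcomp : ContinuousAt (fun ε : ℝ => auxF h₁ h₂ ε ((1 + ε • h₂)⁻¹)) 0 :=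
      ContinuousAt.comp (g := fun p : ℝ × Matrix (Fin n) (Fin n) ℝ => auxF h₁ h₂ p.1 p.2)
        (f := fun ε : ℝ => ((ε, (1 + ε • h₂)⁻¹) : ℝ × Matrix (Fin n) (Fin n) ℝ)) (x := 0)
        hFc.continuousAt hpair
    exact ContinuousAt.comp (g := Matrix.trace)
      (f := fun ε : ℝ => auxF h₁ h₂ ε ((1 + ε • h₂)⁻¹)) (x := 0)
      htr.continuousAt hcomp
  have hgO : auxg h₁ h₂ =O[nhds 0] (fun _ : ℝ => (1 : ℝ)) :=
    Filter.Tendsto.isBigO_one ℝ hgc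
  have hmul : (fun ε : ℝ => ε ^ 4 * auxg h₁ h₂ ε) =O[nhds 0] fun ε : ℝ => ε ^ 4 * 1 :=
    (isBigO_refl (fun ε : ℝ => ε ^ 4) (nhds 0)).mul hgO
  refine IsBigO.congr' hmul (heq.mono fun ε hε => hε.symm) ?_
  filter_upwards with ε using mul_one _
end

section
/- For X = √(g₂^{-1}g₁) with g_i = I + ε h_i in dimension 4, the second elementary symmetric invariant e₂(X) = (1/2)((Tr X)² - Tr(X²)) satisfies e₂(X) = 6 + (3ε/2) Tr(h₁ - h₂) + (ε²/8)[(Tr h₁)² + (Tr h₂)² - 2 Tr(h₁)Tr(h₂) + 8 Tr(h₂²) - 4 Tr(h₁²) - 4 Tr(h₁h₂)] + O(ε³). -/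
open Asymptotics Filter Matrix

/-- The generalized binomial coefficient `C(1/2, k)`. -/
noncomputable def halfChoose (k : ℕ) : ℝ :=
  (∏ i ∈ Finset.range k, ((1 : ℝ) / 2 - i)) / (k.factorial : ℝ)

/-- The principal square root of a matrix close to `1`, defined by the binomial
series `√M = ∑_{k≥0} C(1/2,k) (M-1)^k`. -/
noncomputable def matSqrt {n : ℕ} (M : Matrix (Fin n) (Fin n) ℝ) :
    Matrix (Fin n) (Fin n) ℝ :=
  ∑' k : ℕ, halfChoose k • (M - 1) ^ k

attribute [local instance] Matrix.linftyOpNormedRing Matrix.linftyOpNormedAlgebra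

local notation "Mat" => Matrix (Fin 4) (Fin 4) ℝ

lemma halfChoose_zero : halfChoose 0 = 1 := by simp [halfChoose]
lemma halfChoose_one : halfChoose 1 = 1/2 := by simp [halfChoose]
lemma halfChoose_two : halfChoose 2 = -(1/8) := by
  simp [halfChoose, Finset.prod_range_succ]; norm_num

lemma halfChoose_succ (k : ℕ) :
    halfChoose (k+1) = halfChoose k * ((1/2 - k) / (k+1)) := by
  have hf : (k.factorial : ℝ) ≠ 0 := Nat.cast_ne_zero.2 k.factorial_ne_zero
  have hk : ((k:ℝ)+1) ≠ 0 := by positivity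
  simp only [halfChoose, Finset.prod_range_succ, Nat.factorial_succ]
  push_cast
  rw [div_mul_div_comm]
  rw [mul_comm ((k:ℝ)+1) _]

lemma abs_halfChoose_le_one (k : ℕ) : |halfChoose k| ≤ 1 := by
  induction k with
  | zero => simp [halfChoose_zero]
  | succ k ih =>
    rw [halfChoose_succ, abs_mul]
    have hk0 : (0:ℝ) ≤ k := Nat.cast_nonneg k
    have h1 : |(1/2 - (k:ℝ)) / (k+1)| ≤ 1 := by
      have hk : |((k:ℝ)+1)| = (k:ℝ)+1 := abs_of_pos (by positivity)
      rw [abs_div, hk, div_le_one (by positivity), abs_le]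
      constructor <;> linarith
    calc |halfChoose k| * |(1/2 - (k:ℝ)) / (k+1)| ≤ 1 * 1 :=
          mul_le_mul ih h1 (abs_nonneg _) zero_le_one
      _ = 1 := by ring
lemma norm_term_le (x : Mat) (hx : ‖x‖ ≤ 1/2) (k : ℕ) :
    ‖halfChoose k • x ^ k‖ ≤ (1/2)^k := by
  rcases Nat.eq_zero_or_pos k with rfl | hk
  · simp [halfChoose_zero]
  · rw [norm_smul]
    calc ‖halfChoose k‖ * ‖x ^ k‖ ≤ 1 * ‖x‖ ^ k := by
          exact mul_le_mul (abs_halfChoose_le_one k) (norm_pow_le' x hk) (norm_nonneg _) zero_le_one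
      _ ≤ (1/2)^k := by
          rw [one_mul]
          exact pow_le_pow_left₀ (norm_nonneg _) hx k

lemma summable_sqrtSeries (x : Mat) (hx : ‖x‖ ≤ 1/2) :
    Summable (fun k => halfChoose k • x ^ k) :=
  Summable.of_norm_bounded (summable_geometric_of_lt_one (by norm_num) (by norm_num))
    (norm_term_le x hx)




lemma sqrt_tail_bound (x : Mat) (hx : ‖x‖ ≤ 1/2) :
    ‖(∑' k, halfChoose k • x ^ k) - (1 + (1/2 : ℝ) • x - (1/8 : ℝ) • x ^ 2)‖
      ≤ 2 * ‖x‖ ^ 3 := by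
  have hs := summable_sqrtSeries x hx
  have hsum := Summable.sum_add_tsum_nat_add 3 hs
  have hhead : ∑ i ∈ Finset.range 3, halfChoose i • x ^ i
      = 1 + (1/2 : ℝ) • x - (1/8 : ℝ) • x ^ 2 := by
    simp [Finset.sum_range_succ, halfChoose_zero, halfChoose_one, halfChoose_two]
    module
  have heq : (∑' k, halfChoose k • x ^ k) - (1 + (1/2 : ℝ) • x - (1/8 : ℝ) • x ^ 2)
      = ∑' k, halfChoose (k + 3) • x ^ (k + 3) := by
    rw [← hsum, hhead]; abel
  rw [heq]
  have hterm : ∀ k, ‖halfChoose (k + 3) • x ^ (k + 3)‖ ≤ ‖x‖ ^ 3 * (1/2)^k := by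
    intro k
    rw [norm_smul, pow_add]
    calc ‖halfChoose (k+3)‖ * ‖x ^ k * x ^ 3‖
        ≤ 1 * (‖x‖ ^ k * ‖x‖ ^ 3) := by
          apply mul_le_mul (abs_halfChoose_le_one _) _ (norm_nonneg _) zero_le_one
          exact le_trans (norm_mul_le _ _)
            (mul_le_mul (norm_pow_le x k) (norm_pow_le x 3)
              (norm_nonneg _) (pow_nonneg (norm_nonneg _) _))
      _ ≤ ‖x‖ ^ 3 * (1/2)^k := by
          rw [one_mul, mul_comm]
          gcongr
  calc ‖∑' k, halfChoose (k + 3) • x ^ (k + 3)‖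
      ≤ ∑' k, ‖halfChoose (k + 3) • x ^ (k + 3)‖ := by
        apply norm_tsum_le_tsum_norm
        exact ((summable_nat_add_iff 3).2 hs).norm
    _ ≤ ∑' k : ℕ, ‖x‖ ^ 3 * (1/2)^k := by
        apply Summable.tsum_le_tsum hterm (((summable_nat_add_iff 3).2 hs).norm)
        exact Summable.mul_left _ (summable_geometric_of_lt_one (by norm_num) (by norm_num))
    _ = ‖x‖ ^ 3 * 2 := by
        rw [tsum_mul_left, tsum_geometric_of_lt_one (by norm_num) (by norm_num)]
        norm_num
    _ = 2 * ‖x‖ ^ 3 := by ring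
lemma isUnit_one_add_smul (h : Mat) (ε : ℝ) (hε : |ε| * ‖h‖ ≤ 1/2) :
    IsUnit (1 + ε • h) := by
  have : ‖-(ε • h)‖ < 1 := by
    rw [norm_neg, norm_smul, Real.norm_eq_abs]; linarith
  simpa using (Units.oneSub _ this).isUnit

lemma matInvMul (h : Mat) (ε : ℝ) (hε : |ε| * ‖h‖ ≤ 1/2) :
    (1 + ε • h)⁻¹ * (1 + ε • h) = 1 :=
  Matrix.nonsing_inv_mul _ ((Matrix.isUnit_iff_isUnit_det _).1 (isUnit_one_add_smul h ε hε))

lemma matMulInv (h : Mat) (ε : ℝ) (hε : |ε| * ‖h‖ ≤ 1/2) :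
    (1 + ε • h) * (1 + ε • h)⁻¹ = 1 :=
  Matrix.mul_nonsing_inv _ ((Matrix.isUnit_iff_isUnit_det _).1 (isUnit_one_add_smul h ε hε))

lemma inv_eq_one_sub (h : Mat) (ε : ℝ) (hε : |ε| * ‖h‖ ≤ 1/2) :
    (1 + ε • h)⁻¹ = 1 - ε • (h * (1 + ε • h)⁻¹) := by
  have h1 := matMulInv h ε hε
  have : (1 + ε • h) * (1 + ε • h)⁻¹ = (1 + ε • h)⁻¹ + ε • (h * (1 + ε • h)⁻¹) := by
    rw [add_mul, one_mul, smul_mul_assoc]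
  rw [this] at h1
  linear_combination (norm := module) h1

lemma norm_inv_le_two (h : Mat) (ε : ℝ) (hε : |ε| * ‖h‖ ≤ 1/2) :
    ‖(1 + ε • h)⁻¹‖ ≤ 2 := by
  have h1 := inv_eq_one_sub h ε hε
  have h2 : ‖(1 + ε • h)⁻¹‖ ≤ 1 + |ε| * ‖h‖ * ‖(1 + ε • h)⁻¹‖ := by
    calc ‖(1 + ε • h)⁻¹‖ = ‖1 - ε • (h * (1 + ε • h)⁻¹)‖ := by rw [← h1]
      _ ≤ ‖(1 : Mat)‖ + ‖ε • (h * (1 + ε • h)⁻¹)‖ := norm_sub_le _ _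
      _ ≤ 1 + |ε| * ‖h‖ * ‖(1 + ε • h)⁻¹‖ := by
          rw [norm_one, norm_smul, Real.norm_eq_abs, mul_assoc]
          gcongr
          exact norm_mul_le _ _
  nlinarith [norm_nonneg ((1 + ε • h)⁻¹), abs_nonneg ε, norm_nonneg h]

section MId
variable (h₁ h₂ : Mat) (ε : ℝ)

lemma M_sub_one (hε : |ε| * ‖h₂‖ ≤ 1/2) :
    (1 + ε • h₂)⁻¹ * (1 + ε • h₁) - 1
      = ε • ((1 + ε • h₂)⁻¹ * (h₁ - h₂)) := by
  have h1 := matInvMul h₂ ε hε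
  calc (1 + ε • h₂)⁻¹ * (1 + ε • h₁) - 1
      = (1 + ε • h₂)⁻¹ * (1 + ε • h₁) - (1 + ε • h₂)⁻¹ * (1 + ε • h₂) := by rw [h1]
    _ = (1 + ε • h₂)⁻¹ * ((1 + ε • h₁) - (1 + ε • h₂)) := by rw [mul_sub]
    _ = (1 + ε • h₂)⁻¹ * (ε • (h₁ - h₂)) := by congr 1; module
    _ = ε • ((1 + ε • h₂)⁻¹ * (h₁ - h₂)) := by rw [mul_smul_comm]

lemma inv_expand (hε : |ε| * ‖h₂‖ ≤ 1/2) :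
    (1 + ε • h₂)⁻¹
      = 1 - ε • h₂ + (ε^2) • (h₂ * (h₂ * (1 + ε • h₂)⁻¹)) := by
  have heq := inv_eq_one_sub h₂ ε hε
  nth_rewrite 1 [heq]
  nth_rewrite 1 [heq]
  rw [mul_sub, mul_one, mul_smul_comm]
  module

lemma M_expand (hε : |ε| * ‖h₂‖ ≤ 1/2) :
    (1 + ε • h₂)⁻¹ * (1 + ε • h₁) - 1
        - (ε • (h₁ - h₂) - (ε^2) • (h₂ * (h₁ - h₂)))
      = (ε^3) • ((h₂ * (h₂ * (1 + ε • h₂)⁻¹)) * (h₁ - h₂)) := by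
  rw [M_sub_one h₁ h₂ ε hε]
  nth_rewrite 1 [inv_expand h₂ ε hε]
  rw [add_mul, sub_mul, one_mul, smul_mul_assoc, smul_mul_assoc]
  module
end MId

lemma ev_abs_le {δ : ℝ} (hδ : 0 < δ) : ∀ᶠ ε : ℝ in nhds 0, |ε| ≤ δ :=
  Filter.eventually_of_mem (Metric.closedBall_mem_nhds 0 hδ)
    (fun ε hε => by simpa [Real.dist_eq] using hε)

lemma pow_isBigO_pow {m n : ℕ} (h : n ≤ m) :
    (fun ε : ℝ => ε^m) =O[nhds 0] fun ε => ε^n := by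
  rw [Asymptotics.isBigO_iff]
  refine ⟨1, (ev_abs_le one_pos).mono fun ε hε => ?_⟩
  rw [Real.norm_eq_abs, Real.norm_eq_abs, abs_pow, abs_pow, one_mul]
  exact pow_le_pow_of_le_one (abs_nonneg ε) hε h

lemma smul_monomial_isBigO {E : Type*} [NormedAddCommGroup E] [NormedSpace ℝ E]
    (c : E) (n : ℕ) : (fun ε : ℝ => (ε^n) • c) =O[nhds 0] fun ε => ε^n := by
  rw [Asymptotics.isBigO_iff]
  exact ⟨‖c‖, Filter.Eventually.of_forall fun ε => by
    rw [norm_smul, mul_comm]⟩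

lemma mul_monomial_isBigO (c : ℝ) (n : ℕ) :
    (fun ε : ℝ => ε^n * c) =O[nhds 0] fun ε => ε^n := by
  simpa [smul_eq_mul] using smul_monomial_isBigO (E := ℝ) c n

section Main
variable (h₁ h₂ : Mat)

lemma facts (ε : ℝ) (hε : |ε| ≤ (4*(‖h₁‖+‖h₂‖+1))⁻¹) :
    |ε| ≤ 1 ∧ |ε| * ‖h₂‖ ≤ 1/2 ∧
    ‖(1+ε•h₂)⁻¹*(1+ε•h₁) - 1‖ ≤ 2*‖h₁-h₂‖*|ε| ∧
    ‖(1+ε•h₂)⁻¹*(1+ε•h₁) - 1‖ ≤ 1/2 := by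
  have hn1 := norm_nonneg h₁
  have hn2 := norm_nonneg h₂
  have hNpos : (0:ℝ) < ‖h₁‖+‖h₂‖+1 := by linarith
  have hprod : |ε| * (‖h₁‖+‖h₂‖+1) ≤ 1/4 := by
    have h := mul_le_mul_of_nonneg_right hε (le_of_lt hNpos)
    rwa [mul_inv, mul_assoc, inv_mul_cancel₀ (ne_of_gt hNpos), mul_one,
      show ((4:ℝ))⁻¹ = 1/4 by norm_num] at h
  have habs := abs_nonneg ε
  have h1 : |ε| ≤ 1 := by nlinarith
  have h2 : |ε| * ‖h₂‖ ≤ 1/2 := by nlinarith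
  have hD : ‖h₁ - h₂‖ ≤ ‖h₁‖+‖h₂‖ := norm_sub_le _ _
  have hM : ‖(1+ε•h₂)⁻¹*(1+ε•h₁) - 1‖ ≤ 2*‖h₁-h₂‖*|ε| := by
    rw [M_sub_one h₁ h₂ ε h2, norm_smul, Real.norm_eq_abs]
    calc |ε| * ‖(1+ε•h₂)⁻¹*(h₁-h₂)‖ ≤ |ε| * (2 * ‖h₁-h₂‖) := by
          gcongr
          calc ‖(1+ε•h₂)⁻¹*(h₁-h₂)‖ ≤ ‖(1+ε•h₂)⁻¹‖ * ‖h₁-h₂‖ := norm_mul_le _ _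
            _ ≤ 2 * ‖h₁-h₂‖ := by
                gcongr
                exact norm_inv_le_two h₂ ε h2
      _ = 2*‖h₁-h₂‖*|ε| := by ring
  refine ⟨h1, h2, hM, le_trans hM ?_⟩
  nlinarith
end Main

section Main2
variable (h₁ h₂ : Mat)

lemma deltapos : (0:ℝ) < (4*(‖h₁‖+‖h₂‖+1))⁻¹ := by positivity

lemma bigO_tail :
    (fun ε : ℝ => matSqrt ((1+ε•h₂)⁻¹*(1+ε•h₁))
        - (1 + (1/2:ℝ) • ((1+ε•h₂)⁻¹*(1+ε•h₁) - 1)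
            - (1/8:ℝ) • ((1+ε•h₂)⁻¹*(1+ε•h₁) - 1)^2))
      =O[nhds 0] fun ε => ε^3 := by
  rw [Asymptotics.isBigO_iff]
  refine ⟨16*‖h₁-h₂‖^3, (ev_abs_le (deltapos h₁ h₂)).mono fun ε hε => ?_⟩
  obtain ⟨he1, he2, hM, hM2⟩ := facts h₁ h₂ ε hε
  rw [Real.norm_eq_abs (ε^3), abs_pow]
  calc ‖matSqrt ((1+ε•h₂)⁻¹*(1+ε•h₁))
        - (1 + (1/2:ℝ) • ((1+ε•h₂)⁻¹*(1+ε•h₁) - 1)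
            - (1/8:ℝ) • ((1+ε•h₂)⁻¹*(1+ε•h₁) - 1)^2)‖
      ≤ 2 * ‖(1+ε•h₂)⁻¹*(1+ε•h₁) - 1‖^3 := sqrt_tail_bound _ hM2
    _ ≤ 2 * (2*‖h₁-h₂‖*|ε|)^3 := by
        gcongr
    _ = 16*‖h₁-h₂‖^3 * |ε|^3 := by ring

lemma bigO_F₂ :
    (fun ε : ℝ => (1+ε•h₂)⁻¹*(1+ε•h₁) - 1
        - (ε•(h₁-h₂) - (ε^2)•(h₂*(h₁-h₂))))
      =O[nhds 0] fun ε => ε^3 := by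
  rw [Asymptotics.isBigO_iff]
  refine ⟨2*‖h₂‖^2*‖h₁-h₂‖, (ev_abs_le (deltapos h₁ h₂)).mono fun ε hε => ?_⟩
  obtain ⟨he1, he2, hM, hM2⟩ := facts h₁ h₂ ε hε
  rw [M_expand h₁ h₂ ε he2, norm_smul, Real.norm_eq_abs (ε^3)]
  rw [mul_comm (2*‖h₂‖^2*‖h₁-h₂‖) |ε^3|]
  gcongr
  calc ‖h₂ * (h₂ * (1 + ε • h₂)⁻¹) * (h₁ - h₂)‖
      ≤ ‖h₂ * (h₂ * (1 + ε • h₂)⁻¹)‖ * ‖h₁-h₂‖ := norm_mul_le _ _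
    _ ≤ (‖h₂‖ * (‖h₂‖ * 2)) * ‖h₁-h₂‖ := by
        gcongr
        calc ‖h₂ * (h₂ * (1 + ε • h₂)⁻¹)‖ ≤ ‖h₂‖ * ‖h₂ * (1 + ε • h₂)⁻¹‖ := norm_mul_le _ _
          _ ≤ ‖h₂‖ * (‖h₂‖ * 2) := by
              gcongr
              calc ‖h₂ * (1 + ε • h₂)⁻¹‖ ≤ ‖h₂‖ * ‖(1 + ε • h₂)⁻¹‖ := norm_mul_le _ _
                _ ≤ ‖h₂‖ * 2 := by
                    gcongr
                    exact norm_inv_le_two h₂ ε he2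
    _ = 2*‖h₂‖^2*‖h₁-h₂‖ := by ring

lemma bigO_M1 :
    (fun ε : ℝ => (1+ε•h₂)⁻¹*(1+ε•h₁) - 1) =O[nhds 0] fun ε => ε^1 := by
  rw [Asymptotics.isBigO_iff]
  refine ⟨2*‖h₁-h₂‖, (ev_abs_le (deltapos h₁ h₂)).mono fun ε hε => ?_⟩
  obtain ⟨he1, he2, hM, hM2⟩ := facts h₁ h₂ ε hε
  rw [Real.norm_eq_abs (ε^1), abs_pow, pow_one]
  exact le_of_le_of_eq hM (by ring)

lemma bigO_G :
    (fun ε : ℝ => (1+ε•h₂)⁻¹*(1+ε•h₁) - 1 - ε•(h₁-h₂)) =O[nhds 0] fun ε => ε^2 := by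
  have heq : (fun ε : ℝ => (1+ε•h₂)⁻¹*(1+ε•h₁) - 1 - ε•(h₁-h₂))
      = (fun ε : ℝ => ((1+ε•h₂)⁻¹*(1+ε•h₁) - 1
          - (ε•(h₁-h₂) - (ε^2)•(h₂*(h₁-h₂)))) + -((ε^2)•(h₂*(h₁-h₂)))) := by
    funext ε
    module
  rw [heq]
  exact ((bigO_F₂ h₁ h₂).trans (pow_isBigO_pow (by norm_num))).add
    (smul_monomial_isBigO (h₂*(h₁-h₂)) 2).neg_left

lemma bigO_F₃ :
    (fun ε : ℝ => ((1+ε•h₂)⁻¹*(1+ε•h₁) - 1) * ((1+ε•h₂)⁻¹*(1+ε•h₁) - 1)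
        - (ε^2)•((h₁-h₂)*(h₁-h₂)))
      =O[nhds 0] fun ε => ε^3 := by
  have heq : (fun ε : ℝ => ((1+ε•h₂)⁻¹*(1+ε•h₁) - 1) * ((1+ε•h₂)⁻¹*(1+ε•h₁) - 1)
        - (ε^2)•((h₁-h₂)*(h₁-h₂)))
      = (fun ε : ℝ => ((1+ε•h₂)⁻¹*(1+ε•h₁) - 1) * ((1+ε•h₂)⁻¹*(1+ε•h₁) - 1 - ε•(h₁-h₂)))
        + (fun ε : ℝ => ((1+ε•h₂)⁻¹*(1+ε•h₁) - 1 - ε•(h₁-h₂)) * (ε•(h₁-h₂))) := by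
    funext ε
    have h1 : (ε•(h₁-h₂)) * (ε•(h₁-h₂)) = (ε^2)•((h₁-h₂)*(h₁-h₂)) := by
      rw [smul_mul_assoc, mul_smul_comm, smul_smul, sq]
    simp only [Pi.add_apply]
    rw [← h1]
    generalize ((1+ε•h₂)⁻¹*(1+ε•h₁) - 1 : Mat) = m
    generalize (ε•(h₁-h₂) : Mat) = d
    noncomm_ring
  rw [heq]
  have hmul1 := (bigO_M1 h₁ h₂).mul (bigO_G h₁ h₂)
  have hmul2 := (bigO_G h₁ h₂).mul (smul_monomial_isBigO (E := Mat) (h₁-h₂) 1)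
  have e1 : (fun ε : ℝ => ε^1 * ε^2) = fun ε => ε^3 := by funext ε; ring
  have e2 : (fun ε : ℝ => ε^2 * ε^1) = fun ε => ε^3 := by funext ε; ring
  rw [e1] at hmul1
  rw [e2] at hmul2
  exact hmul1.add (by simpa using hmul2)
end Main2

noncomputable def Qm (h₁ h₂ : Mat) : Mat :=
  -((1/2:ℝ) • (h₂*(h₁-h₂))) - (1/8:ℝ) • ((h₁-h₂)*(h₁-h₂))

noncomputable def Dm' (h₁ h₂ : Mat) : Mat := (1/2:ℝ) • (h₁-h₂)

/-- matrix-valued remainder of `matSqrt` minus its second-order polynomial -/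
noncomputable def Pf (h₁ h₂ : Mat) : ℝ → Mat :=
  fun ε => (ε^1) • Dm' h₁ h₂ + (ε^2) • Qm h₁ h₂

noncomputable def Af (h₁ h₂ : Mat) : ℝ → Mat :=
  fun ε => matSqrt ((1+ε•h₂)⁻¹*(1+ε•h₁)) - 1

section Main3
variable (h₁ h₂ : Mat)

lemma bigO_KEY :
    (fun ε : ℝ => Af h₁ h₂ ε - Pf h₁ h₂ ε) =O[nhds 0] fun ε => ε^3 := by
  have heq : (fun ε : ℝ => Af h₁ h₂ ε - Pf h₁ h₂ ε)
      = (fun ε : ℝ => matSqrt ((1+ε•h₂)⁻¹*(1+ε•h₁))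
          - (1 + (1/2:ℝ) • ((1+ε•h₂)⁻¹*(1+ε•h₁) - 1)
              - (1/8:ℝ) • ((1+ε•h₂)⁻¹*(1+ε•h₁) - 1)^2))
        + (1/2:ℝ) • (fun ε : ℝ => (1+ε•h₂)⁻¹*(1+ε•h₁) - 1
            - (ε•(h₁-h₂) - (ε^2)•(h₂*(h₁-h₂))))
        - (1/8:ℝ) • (fun ε : ℝ => ((1+ε•h₂)⁻¹*(1+ε•h₁) - 1) * ((1+ε•h₂)⁻¹*(1+ε•h₁) - 1)
            - (ε^2)•((h₁-h₂)*(h₁-h₂))) := by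
    funext ε
    simp only [Pi.add_apply, Pi.sub_apply, Pi.smul_apply, Af, Pf, Qm, Dm']
    rw [show ((1+ε•h₂)⁻¹*(1+ε•h₁) - 1)^2 = ((1+ε•h₂)⁻¹*(1+ε•h₁) - 1) * ((1+ε•h₂)⁻¹*(1+ε•h₁) - 1) from pow_two _]
    module
  rw [heq]
  exact (((bigO_tail h₁ h₂).add ((bigO_F₂ h₁ h₂).const_smul_left (1/2:ℝ))).sub
    ((bigO_F₃ h₁ h₂).const_smul_left (1/8:ℝ)))

end Main3

noncomputable def Ltr : Mat →L[ℝ] ℝ :=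
  LinearMap.toContinuousLinearMap (Matrix.traceLinearMap (Fin 4) ℝ ℝ)

lemma Ltr_apply (A : Mat) : Ltr A = A.trace := rfl

noncomputable def pf (h₁ h₂ : Mat) : ℝ → ℝ :=
  fun ε => ε^1 * (Dm' h₁ h₂).trace + ε^2 * (Qm h₁ h₂).trace

noncomputable def af (h₁ h₂ : Mat) : ℝ → ℝ := fun ε => (Af h₁ h₂ ε).trace

lemma epscube_isBigO_one : (fun ε : ℝ => ε^3) =O[nhds 0] (fun _ => (1:ℝ)) := by
  simpa using pow_isBigO_pow (Nat.zero_le 3)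

lemma monomial_isBigO_one (c : ℝ) (n : ℕ) :
    (fun ε : ℝ => ε^n * c) =O[nhds 0] (fun _ => (1:ℝ)) := by
  simpa using (mul_monomial_isBigO c n).trans (pow_isBigO_pow (Nat.zero_le n))

lemma smul_monomial_isBigO_one (c : Mat) (n : ℕ) :
    (fun ε : ℝ => (ε^n) • c) =O[nhds 0] (fun _ => (1:ℝ)) := by
  simpa using (smul_monomial_isBigO c n).trans (pow_isBigO_pow (Nat.zero_le n))

section Main4
variable (h₁ h₂ : Mat)

lemma bigO_a_sub_p :
    (fun ε : ℝ => af h₁ h₂ ε - pf h₁ h₂ ε) =O[nhds 0] fun ε => ε^3 := by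
  have h := (Ltr.isBigO_comp (fun ε => Af h₁ h₂ ε - Pf h₁ h₂ ε) (nhds 0)).trans
    (bigO_KEY h₁ h₂)
  have heq : (fun ε : ℝ => af h₁ h₂ ε - pf h₁ h₂ ε)
      = fun ε => Ltr (Af h₁ h₂ ε - Pf h₁ h₂ ε) := by
    funext ε
    rw [map_sub, Ltr_apply, Ltr_apply]
    simp [af, pf, Pf, Matrix.trace_add, Matrix.trace_smul, smul_eq_mul]
  rw [heq]; exact h

lemma bigO_p_one : pf h₁ h₂ =O[nhds 0] (fun _ => (1:ℝ)) := by
  unfold pf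
  exact (monomial_isBigO_one _ 1).add (monomial_isBigO_one _ 2)

lemma bigO_a_one : af h₁ h₂ =O[nhds 0] (fun _ => (1:ℝ)) := by
  have h : af h₁ h₂ = fun ε => (af h₁ h₂ ε - pf h₁ h₂ ε) + pf h₁ h₂ ε := by
    funext ε; ring
  rw [h]
  exact ((bigO_a_sub_p h₁ h₂).trans epscube_isBigO_one).add (bigO_p_one h₁ h₂)

lemma bigO_sq :
    (fun ε : ℝ => af h₁ h₂ ε^2 - pf h₁ h₂ ε^2) =O[nhds 0] fun ε => ε^3 := by
  have h := (bigO_a_sub_p h₁ h₂).mul ((bigO_a_one h₁ h₂).add (bigO_p_one h₁ h₂))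
  have e1 : (fun ε : ℝ => ε^3 * 1) = fun ε : ℝ => ε^3 := by funext ε; ring
  rw [e1] at h
  have e2 : (fun ε : ℝ => af h₁ h₂ ε^2 - pf h₁ h₂ ε^2)
      = fun ε => (af h₁ h₂ ε - pf h₁ h₂ ε) * (af h₁ h₂ ε + pf h₁ h₂ ε) := by
    funext ε; ring
  rw [e2]; exact h

lemma bigO_Pf_one : (Pf h₁ h₂) =O[nhds 0] (fun _ => (1:ℝ)) := by
  unfold Pf
  exact (smul_monomial_isBigO_one _ 1).add (smul_monomial_isBigO_one _ 2)

lemma bigO_Af_one : (Af h₁ h₂) =O[nhds 0] (fun _ => (1:ℝ)) := by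
  have h : Af h₁ h₂ = fun ε => (Af h₁ h₂ ε - Pf h₁ h₂ ε) + Pf h₁ h₂ ε := by
    funext ε; abel
  rw [h]
  exact ((bigO_KEY h₁ h₂).trans epscube_isBigO_one).add (bigO_Pf_one h₁ h₂)

lemma bigO_PP_AA :
    (fun ε : ℝ => (Pf h₁ h₂ ε * Pf h₁ h₂ ε).trace - (Af h₁ h₂ ε * Af h₁ h₂ ε).trace)
      =O[nhds 0] fun ε => ε^3 := by
  have hm : (fun ε : ℝ => Pf h₁ h₂ ε * Pf h₁ h₂ ε - Af h₁ h₂ ε * Af h₁ h₂ ε)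
      =O[nhds 0] fun ε => ε^3 := by
    have heq : (fun ε : ℝ => Pf h₁ h₂ ε * Pf h₁ h₂ ε - Af h₁ h₂ ε * Af h₁ h₂ ε)
        = fun ε => Af h₁ h₂ ε * (Pf h₁ h₂ ε - Af h₁ h₂ ε)
            + (Pf h₁ h₂ ε - Af h₁ h₂ ε) * Pf h₁ h₂ ε := by
      funext ε
      rw [mul_sub, sub_mul]
      abel
    rw [heq]
    have hPA : (fun ε : ℝ => Pf h₁ h₂ ε - Af h₁ h₂ ε) =O[nhds 0] fun ε => ε^3 := by
      have := (bigO_KEY h₁ h₂).neg_left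
      simpa [neg_sub] using this
    have h1 := (bigO_Af_one h₁ h₂).mul hPA
    have h2 := hPA.mul (bigO_Pf_one h₁ h₂)
    have e1 : (fun ε : ℝ => (1:ℝ) * ε^3) = fun ε : ℝ => ε^3 := by funext ε; ring
    have e2 : (fun ε : ℝ => ε^3 * (1:ℝ)) = fun ε : ℝ => ε^3 := by funext ε; ring
    rw [e1] at h1; rw [e2] at h2
    exact h1.add h2
  have h := (Ltr.isBigO_comp
    (fun ε => Pf h₁ h₂ ε * Pf h₁ h₂ ε - Af h₁ h₂ ε * Af h₁ h₂ ε) (nhds 0)).trans hm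
  have heq : (fun ε : ℝ => (Pf h₁ h₂ ε * Pf h₁ h₂ ε).trace - (Af h₁ h₂ ε * Af h₁ h₂ ε).trace)
      = fun ε => Ltr (Pf h₁ h₂ ε * Pf h₁ h₂ ε - Af h₁ h₂ ε * Af h₁ h₂ ε) := by
    funext ε
    rw [map_sub, Ltr_apply, Ltr_apply]
  rw [heq]; exact h

end Main4

section Main5
variable (h₁ h₂ : Mat)

lemma trace_PP (ε : ℝ) :
    (Pf h₁ h₂ ε * Pf h₁ h₂ ε).trace
      = ε^2 * (Dm' h₁ h₂ * Dm' h₁ h₂).trace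
        + ε^3 * ((Dm' h₁ h₂ * Qm h₁ h₂).trace + (Qm h₁ h₂ * Dm' h₁ h₂).trace)
        + ε^4 * (Qm h₁ h₂ * Qm h₁ h₂).trace := by
  simp only [Pf, mul_add, add_mul, smul_mul_assoc, mul_smul_comm, smul_smul,
    Matrix.trace_add, Matrix.trace_smul, smul_eq_mul]
  ring

lemma trace_Dm' : (Dm' h₁ h₂).trace = (h₁.trace - h₂.trace)/2 := by
  simp [Dm', Matrix.trace_smul, Matrix.trace_sub, smul_eq_mul]
  ring

lemma trace_DD' :
    (Dm' h₁ h₂ * Dm' h₁ h₂).trace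
      = ((h₁*h₁).trace - 2*(h₁*h₂).trace + (h₂*h₂).trace)/4 := by
  simp only [Dm', smul_mul_assoc, mul_smul_comm, smul_smul, sub_mul, mul_sub,
    Matrix.trace_smul, Matrix.trace_sub, smul_eq_mul, Matrix.trace_mul_comm h₂ h₁]
  ring

lemma trace_Q :
    (Qm h₁ h₂).trace
      = -(1/2)*((h₁*h₂).trace - (h₂*h₂).trace)
        - (1/8)*((h₁*h₁).trace - 2*(h₁*h₂).trace + (h₂*h₂).trace) := by
  simp only [Qm, smul_mul_assoc, mul_smul_comm, smul_smul, sub_mul, mul_sub,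
    Matrix.trace_smul, Matrix.trace_sub, Matrix.trace_neg, smul_eq_mul,
    Matrix.trace_mul_comm h₂ h₁]
  ring

lemma bigO_pol :
    (fun ε : ℝ => 6 + 3*pf h₁ h₂ ε + pf h₁ h₂ ε^2/2 - (Pf h₁ h₂ ε * Pf h₁ h₂ ε).trace/2
        - (6 + 3 * ε / 2 * (h₁ - h₂).trace
            + ε ^ 2 / 8 * (h₁.trace ^ 2 + h₂.trace ^ 2
              - 2 * h₁.trace * h₂.trace
              + 8 * (h₂ ^ 2).trace - 4 * (h₁ ^ 2).trace - 4 * (h₁ * h₂).trace)))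
      =O[nhds 0] fun ε => ε^3 := by
  have heq : (fun ε : ℝ => 6 + 3*pf h₁ h₂ ε + pf h₁ h₂ ε^2/2
        - (Pf h₁ h₂ ε * Pf h₁ h₂ ε).trace/2
        - (6 + 3 * ε / 2 * (h₁ - h₂).trace
            + ε ^ 2 / 8 * (h₁.trace ^ 2 + h₂.trace ^ 2
              - 2 * h₁.trace * h₂.trace
              + 8 * (h₂ ^ 2).trace - 4 * (h₁ ^ 2).trace - 4 * (h₁ * h₂).trace)))
      = fun ε : ℝ => ε^3 * ((Dm' h₁ h₂).trace * (Qm h₁ h₂).trace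
            - ((Dm' h₁ h₂ * Qm h₁ h₂).trace + (Qm h₁ h₂ * Dm' h₁ h₂).trace)/2)
          + ε^4 * (((Qm h₁ h₂).trace^2 - (Qm h₁ h₂ * Qm h₁ h₂).trace)/2) := by
    funext ε
    rw [trace_PP, show h₁^2 = h₁*h₁ from pow_two h₁, show h₂^2 = h₂*h₂ from pow_two h₂]
    simp only [pf, trace_Dm', trace_DD', trace_Q, Matrix.trace_sub]
    ring
  rw [heq]
  exact (mul_monomial_isBigO _ 3).add
    ((mul_monomial_isBigO _ 4).trans (pow_isBigO_pow (by norm_num)))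

end Main5

/-- In dimension 4, for `X = √(g₂⁻¹g₁)` with `g_i = I + ε h_i`, the invariant
`e₂(X) = ((Tr X)² - Tr X²)/2` satisfies
`e₂(X) = 6 + (3ε/2)Tr(h₁-h₂) + (ε²/8)[(Tr h₁)² + (Tr h₂)² - 2 Tr h₁ Tr h₂
  + 8 Tr h₂² - 4 Tr h₁² - 4 Tr(h₁h₂)] + O(ε³)`. -/
theorem e2_expansion (h₁ h₂ : Matrix (Fin 4) (Fin 4) ℝ)
    (hs₁ : h₁.IsSymm) (hs₂ : h₂.IsSymm) :
    (fun ε : ℝ =>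
        (((matSqrt ((1 + ε • h₂)⁻¹ * (1 + ε • h₁))).trace ^ 2
            - ((matSqrt ((1 + ε • h₂)⁻¹ * (1 + ε • h₁))) ^ 2).trace) / 2)
          - (6 + 3 * ε / 2 * (h₁ - h₂).trace
            + ε ^ 2 / 8 * (h₁.trace ^ 2 + h₂.trace ^ 2
              - 2 * h₁.trace * h₂.trace
              + 8 * (h₂ ^ 2).trace - 4 * (h₁ ^ 2).trace - 4 * (h₁ * h₂).trace)))
      =O[nhds 0] fun ε : ℝ => ε ^ 3 := by
  have heq : (fun ε : ℝ =>
        (((matSqrt ((1 + ε • h₂)⁻¹ * (1 + ε • h₁))).trace ^ 2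
            - ((matSqrt ((1 + ε • h₂)⁻¹ * (1 + ε • h₁))) ^ 2).trace) / 2)
          - (6 + 3 * ε / 2 * (h₁ - h₂).trace
            + ε ^ 2 / 8 * (h₁.trace ^ 2 + h₂.trace ^ 2
              - 2 * h₁.trace * h₂.trace
              + 8 * (h₂ ^ 2).trace - 4 * (h₁ ^ 2).trace - 4 * (h₁ * h₂).trace)))
      = (fun ε : ℝ => 3 * (af h₁ h₂ ε - pf h₁ h₂ ε))
        + (fun ε : ℝ => (1/2) * (af h₁ h₂ ε^2 - pf h₁ h₂ ε^2))
        + (fun ε : ℝ => (1/2) * ((Pf h₁ h₂ ε * Pf h₁ h₂ ε).trace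
            - (Af h₁ h₂ ε * Af h₁ h₂ ε).trace))
        + (fun ε : ℝ => 6 + 3*pf h₁ h₂ ε + pf h₁ h₂ ε^2/2
            - (Pf h₁ h₂ ε * Pf h₁ h₂ ε).trace/2
            - (6 + 3 * ε / 2 * (h₁ - h₂).trace
              + ε ^ 2 / 8 * (h₁.trace ^ 2 + h₂.trace ^ 2
                - 2 * h₁.trace * h₂.trace
                + 8 * (h₂ ^ 2).trace - 4 * (h₁ ^ 2).trace - 4 * (h₁ * h₂).trace))) := by
    funext ε
    simp only [Pi.add_apply]
    set x : Mat := matSqrt ((1 + ε • h₂)⁻¹ * (1 + ε • h₁)) with hx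
    have hAfx : Af h₁ h₂ ε = x - 1 := rfl
    have hxt : x.trace = af h₁ h₂ ε + 4 := by
      have h1 : af h₁ h₂ ε = (x - 1).trace := rfl
      rw [h1, Matrix.trace_sub, Matrix.trace_one]
      simp
    have hAA : Af h₁ h₂ ε * Af h₁ h₂ ε = x^2 - x - x + 1 := by
      rw [hAfx]; noncomm_ring
    have hx2 : (x^2).trace = (Af h₁ h₂ ε * Af h₁ h₂ ε).trace + 2 * af h₁ h₂ ε + 4 := by
      rw [hAA]
      simp only [Matrix.trace_add, Matrix.trace_sub, Matrix.trace_one]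
      rw [hxt]
      simp
      ring
    rw [hxt, hx2]
    ring
  rw [heq]
  exact (((bigO_a_sub_p h₁ h₂).const_mul_left 3).add
      ((bigO_sq h₁ h₂).const_mul_left (1/2))).add
    ((bigO_PP_AA h₁ h₂).const_mul_left (1/2)) |>.add (bigO_pol h₁ h₂)
end
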